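/- In any signed subdivision of K4, every edge lies in an even number of negative circles and an even number of positive circles. -/

import Mathlib

open SimpleGraph Finset

variable {V : Type*} [DecidableEq V]

/-- The sign (product of edge signs) of a finite set of edges. -/
def esign (σ : Sym2 V → ℤˣ) (s : Finset (Sym2 V)) : ℤˣ := ∏ e ∈ s, σ e

/-- The sign of a walk: the product of the signs of its edges. -/
def wsign (σ : Sym2 V → ℤˣ) {G : SimpleGraph V} {u v : V} (w : G.Walk u v) : ℤˣ :=
  (w.edges.map σ).prod

/-- `s` is the edge set of a circle (cycle) of `G`. -/
def IsCircleOf (G : SimpleGraph V) (s : Finset (Sym2 V)) : Prop :=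
  ∃ (a : V) (w : G.Walk a a), w.IsCycle ∧ w.edges.toFinset = s

/-- The signature obtained from `σ` by switching with `ζ`. -/
def switchSign (σ : Sym2 V → ℤˣ) (ζ : V → ℤˣ) : Sym2 V → ℤˣ :=
  fun e => Sym2.lift ⟨fun a b => ζ a * σ s(a, b) * ζ b, by
    intro a b
    simp only []
    rw [Sym2.eq_swap]
    simp [mul_comm, mul_assoc, mul_left_comm]⟩ e

/-- `b` is a balancing edge: one can switch so that `b` is the unique negative edge. -/
def IsBalancingEdge (G : SimpleGraph V) (σ : Sym2 V → ℤˣ) (b : Sym2 V) : Prop :=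
  b ∈ G.edgeSet ∧ ∃ ζ : V → ℤˣ, ∀ f ∈ G.edgeSet, (switchSign σ ζ f = -1 ↔ f = b)

/-- `F` is the edge set of a bridge of the circle `w` in `G`: either a single
chord of `w`, or the edge set attached to a connected component of `G` minus
the vertices of `w`. -/
def IsBridgeOf {a : V} (G : SimpleGraph V) (w : G.Walk a a) (F : Set (Sym2 V)) : Prop :=
  (∃ x y : V, x ≠ y ∧ x ∈ w.support ∧ y ∈ w.support ∧ G.Adj x y ∧
      s(x, y) ∉ w.edges ∧ F = {s(x, y)}) ∨
  (∃ D : Set V, D.Nonempty ∧ (∀ x ∈ D, x ∉ w.support) ∧ (G.induce D).Connected ∧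
      (∀ x ∈ D, ∀ y : V, G.Adj x y → y ∈ D ∨ y ∈ w.support) ∧
      F = {e | e ∈ G.edgeSet ∧ ∃ x ∈ D, x ∈ e})

/-- The vertices of attachment of a bridge with edge set `F`. -/
def attachments {a : V} (G : SimpleGraph V) (w : G.Walk a a) (F : Set (Sym2 V)) : Set V :=
  {x | x ∈ w.support ∧ ∃ e ∈ F, x ∈ e}

/-- A path through a bridge: a path between two distinct vertices of attachment
all of whose edges lie in the bridge. -/
def IsPathThrough {a : V} (G : SimpleGraph V) (w : G.Walk a a) (F : Set (Sym2 V))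
    {x y : V} (Q : G.Walk x y) : Prop :=
  x ≠ y ∧ x ∈ attachments G w F ∧ y ∈ attachments G w F ∧ Q.IsPath ∧
    ∀ e ∈ Q.edges, e ∈ F

/-- `G` is a block: it is connected and has no cutpoint. -/
def IsBlock (G : SimpleGraph V) : Prop :=
  G.Connected ∧ ∀ v : V, ((⊤ : G.Subgraph).deleteVerts {v}).coe.Connected

/-- `G` is a subdivision of `K₄`: there are four branch vertices joined by six
pairwise internally disjoint paths which use up all edges and vertices of `G`. -/
def IsSubdivisionOfK4 (G : SimpleGraph V) : Prop :=
  ∃ (f : Fin 4 → V), Function.Injective f ∧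
    ∃ P : ∀ i j : Fin 4, i < j → G.Walk (f i) (f j),
      (∀ i j (h : i < j), (P i j h).IsPath ∧ 0 < (P i j h).length) ∧
      (∀ i j (hij : i < j) k l (hkl : k < l), (i, j) ≠ (k, l) →
        ∀ x, x ∈ (P i j hij).support → x ∈ (P k l hkl).support →
          (x = f i ∨ x = f j) ∧ (x = f k ∨ x = f l)) ∧
      (∀ e : Sym2 V, e ∈ G.edgeSet ↔ ∃ i j, ∃ hij : i < j, e ∈ (P i j hij).edges) ∧
      (∀ x : V, ∃ i j, ∃ hij : i < j, x ∈ (P i j hij).support)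

lemma k4_pattern : ∀ (tab tac tad tbc tbd tcd : Bool), tab = true →
    (tab.toNat + tac.toNat + tad.toNat = 0 ∨ tab.toNat + tac.toNat + tad.toNat = 2) →
    (tab.toNat + tbc.toNat + tbd.toNat = 0 ∨ tab.toNat + tbc.toNat + tbd.toNat = 2) →
    (tac.toNat + tbc.toNat + tcd.toNat = 0 ∨ tac.toNat + tbc.toNat + tcd.toNat = 2) →
    (tad.toNat + tbd.toNat + tcd.toNat = 0 ∨ tad.toNat + tbd.toNat + tcd.toNat = 2) →
    (tab ∧ tac ∧ tbc ∧ ¬tad ∧ ¬tbd ∧ ¬tcd) ∨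
    (tab ∧ tad ∧ tbd ∧ ¬tac ∧ ¬tbc ∧ ¬tcd) ∨
    (tab ∧ tbc ∧ tcd ∧ tad ∧ ¬tac ∧ ¬tbd) ∨
    (tab ∧ tbd ∧ tcd ∧ tac ∧ ¬tad ∧ ¬tbc) := by
  intro tab tac tad tbc tbd tcd
  cases tab <;> cases tac <;> cases tad <;> cases tbc <;> cases tbd <;> cases tcd <;>
    intro h0 h1 h2 h3 h4 <;>
    first
      | decide
      | (exfalso; simp only [Bool.toNat_true, Bool.toNat_false] at h1 h2 h3 h4; omega)
      | simp at h0

lemma sign_parity (s1 s2 s3 s4 : ℤˣ) (h : s1*s2*s3*s4 = 1) :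
    Even ((if s1 = -1 then 1 else 0) + ((if s2 = -1 then 1 else 0) +
      ((if s3 = -1 then 1 else 0) + (if s4 = -1 then 1 else 0))) : ℕ) ∧
    Even ((if s1 = 1 then 1 else 0) + ((if s2 = 1 then 1 else 0) +
      ((if s3 = 1 then 1 else 0) + (if s4 = 1 then 1 else 0))) : ℕ) := by
  rcases Int.units_eq_one_or s1 with rfl|rfl <;>
  rcases Int.units_eq_one_or s2 with rfl|rfl <;>
  rcases Int.units_eq_one_or s3 with rfl|rfl <;>
  rcases Int.units_eq_one_or s4 with rfl|rfl <;>
  revert h <;> decide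

section Aux
set_option linter.unusedSectionVars false
variable {G : SimpleGraph V}

lemma mem_support_of_mem_edges' {u v x : V} {p : G.Walk u v} {g : Sym2 V}
    (hg : g ∈ p.edges) (hx : x ∈ g) : x ∈ p.support := by
  induction g with
  | _ a b =>
    rcases Sym2.mem_iff.mp hx with rfl | rfl
    · exact p.fst_mem_support_of_mem_edges hg
    · exact p.snd_mem_support_of_mem_edges hg

lemma start_unique_edge {u v : V} {p : G.Walk u v} (hp : p.IsPath) (hn : ¬ p.Nil) :
    ∃ z, s(u, z) ∈ p.edges ∧ ∀ g ∈ p.edges, u ∈ g → g = s(u, z) := by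
  cases p with
  | nil => simp at hn
  | cons h q =>
    rename_i b
    refine ⟨b, by simp, ?_⟩
    intro g hg hug
    rw [Walk.edges_cons, List.mem_cons] at hg
    rcases hg with rfl | hg
    · rfl
    · exact absurd (mem_support_of_mem_edges' hg hug)
        ((Walk.cons_isPath_iff h q).mp hp).2

lemma cycle_two_edges_start {v : V} {w : G.Walk v v} (hw : w.IsCycle) :
    ∃ x y, x ≠ y ∧ ∀ z, (s(v, z) ∈ w.edges ↔ z = x ∨ z = y) := by
  cases w with
  | nil => exact absurd hw Walk.IsCycle.not_of_nil
  | cons h p =>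
    rename_i b
    have hcyc := (Walk.cons_isCycle_iff p h).mp hw
    have hp : p.IsPath := hcyc.1
    have hn : ¬ p.Nil := by
      intro hnil
      exact h.ne (Walk.Nil.eq hnil ▸ rfl)
    have hn' : ¬ p.reverse.Nil := by
      rwa [Walk.nil_iff_length_eq, Walk.length_reverse, ← Walk.nil_iff_length_eq]
    obtain ⟨z, hz1, hz2⟩ := start_unique_edge hp.reverse hn'
    rw [Walk.edges_reverse, List.mem_reverse] at hz1
    have hbz : b ≠ z := by
      rintro rfl
      exact hcyc.2 hz1
    refine ⟨b, z, hbz, fun z' => ?_⟩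
    constructor
    · intro hmem
      rw [Walk.edges_cons, List.mem_cons] at hmem
      rcases hmem with heq | hmem
      · left
        rcases Sym2.eq_iff.mp heq with ⟨-, rfl⟩ | ⟨rfl, rfl⟩ <;> rfl
      · right
        have := hz2 s(v, z') (by rwa [Walk.edges_reverse, List.mem_reverse]) (by simp)
        rcases Sym2.eq_iff.mp this with ⟨-, h2⟩ | ⟨h1, h2⟩
        · exact h2
        · exact h2 ▸ h1
    · rintro (rfl | rfl)
      · simp
      · rw [Walk.edges_cons, List.mem_cons]; right; exact hz1

/-- rotate version -/
lemma cycle_two_edges {u v : V} {w : G.Walk u u} (hw : w.IsCycle) (hv : v ∈ w.support) :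
    ∃ x y, x ≠ y ∧ ∀ z, (s(v, z) ∈ w.edges ↔ z = x ∨ z = y) := by
  obtain ⟨x, y, hxy, hmem⟩ := cycle_two_edges_start (hw.rotate hv)
  refine ⟨x, y, hxy, fun z => ?_⟩
  rw [← hmem z, (w.rotate_edges v hv).mem_iff]

lemma cycle_other_edge {u v n1 n2 : V} {w : G.Walk u u} (hw : w.IsCycle)
    (hne : n1 ≠ n2) (hcl : ∀ z, G.Adj v z → z = n1 ∨ z = n2)
    (h1 : s(v, n1) ∈ w.edges) : s(v, n2) ∈ w.edges := by
  have hv : v ∈ w.support := w.fst_mem_support_of_mem_edges h1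
  obtain ⟨x, y, hxy, hmem⟩ := cycle_two_edges hw hv
  have hx : x = n1 ∨ x = n2 := hcl x (w.adj_of_mem_edges ((hmem x).mpr (Or.inl rfl)))
  have hy : y = n1 ∨ y = n2 := hcl y (w.adj_of_mem_edges ((hmem y).mpr (Or.inr rfl)))
  have h1' : n1 = x ∨ n1 = y := (hmem n1).mp h1
  rw [hmem]
  rcases hx with rfl | rfl <;> rcases hy with rfl | rfl <;> tauto
lemma path_start_ne_end {u v : V} {p : G.Walk u v} (hp : p.IsPath) (hn : ¬ p.Nil) : u ≠ v := by
  cases p with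
  | nil => simp at hn
  | cons h q =>
    have := (Walk.cons_isPath_iff _ q).mp hp
    rintro rfl
    exact this.2 q.end_mem_support

/-- Propagation along an "internally degree-2" path inside a cycle. -/
lemma step1 {u : V} {w : G.Walk u u} (hw : w.IsCycle) :
    ∀ {x t : V} (p : G.Walk x t), p.IsPath →
    (∀ v ∈ p.support, v ≠ x → v ≠ t → ∀ z, G.Adj v z → s(v, z) ∈ p.edges) →
    ∀ g1 ∈ p.edges, g1 ∈ w.edges → ∀ g2 ∈ p.edges, g2 ∈ w.edges := by
  intro x t p
  induction p with
  | nil => intro _ _ g1 hg1; simp at hg1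
  | cons h q ih =>
    rename_i x b t
    intro hp hint g1 hg1 hg1w g2 hg2
    have hq : q.IsPath := ((Walk.cons_isPath_iff h q).mp hp).1
    have hxq : x ∉ q.support := ((Walk.cons_isPath_iff h q).mp hp).2
    by_cases hqn : q.Nil
    · -- q nil: edges = [s(x,b)]
      have : q.edges = [] := by
        have := Walk.nil_iff_length_eq.mp hqn
        have hl : q.edges.length = 0 := by rw [Walk.length_edges, this]
        exact List.length_eq_zero_iff.mp hl
      rw [Walk.edges_cons, this] at hg1 hg2
      simp at hg1 hg2
      rwa [hg2, ← hg1]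
    · -- q nonnil
      have hbx : b ≠ x := fun hbx => h.ne hbx.symm
      have hbt : b ≠ t := path_start_ne_end hq hqn
      obtain ⟨z0, hz0e, hz0u⟩ := start_unique_edge hq hqn
      have hxz0 : x ≠ z0 := by
        rintro rfl
        exact hxq (mem_support_of_mem_edges' hz0e (by simp))
      have hcl : ∀ z, G.Adj b z → z = x ∨ z = z0 := by
        intro z hadj
        have := hint b (by simp) hbx hbt z hadj
        rw [Walk.edges_cons, List.mem_cons] at this
        rcases this with heq | hmem
        · rcases Sym2.eq_iff.mp heq with ⟨hbx', -⟩ | ⟨-, rfl⟩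
          · exact absurd hbx' hbx
          · exact Or.inl rfl
        · have := hz0u _ hmem (by simp)
          rcases Sym2.eq_iff.mp this with ⟨-, rfl⟩ | ⟨rfl, rfl⟩
          · exact Or.inr rfl
          · exact Or.inr rfl
      have key : s(x, b) ∈ w.edges ↔ s(b, z0) ∈ w.edges := by
        constructor
        · intro hxb
          exact cycle_other_edge hw hxz0 hcl (by rwa [Sym2.eq_swap] at hxb)
        · intro hbz
          have := cycle_other_edge hw (Ne.symm hxz0)
            (fun z hz => (hcl z hz).symm) hbz
          rwa [Sym2.eq_swap] at this
      -- interior condition for q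
      have hintq : ∀ v ∈ q.support, v ≠ b → v ≠ t → ∀ z, G.Adj v z → s(v, z) ∈ q.edges := by
        intro v hv hvb hvt z hz
        have hvx : v ≠ x := fun hvx => hxq (hvx ▸ hv)
        have := hint v (by simp [hv]) hvx hvt z hz
        rw [Walk.edges_cons, List.mem_cons] at this
        rcases this with heq | hmem
        · rcases Sym2.eq_iff.mp heq with ⟨hvx', -⟩ | ⟨hvb', hzx⟩
          · exact absurd hvx' hvx
          · exact absurd hvb' hvb
        · exact hmem
      rw [Walk.edges_cons, List.mem_cons] at hg1 hg2
      rcases hg1 with rfl | hg1 <;> rcases hg2 with rfl | hg2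
      · exact hg1w
      · exact ih hq hintq _ hz0e (key.mp hg1w) g2 hg2
      · exact key.mpr (ih hq hintq g1 hg1 hg1w _ hz0e)
      · exact ih hq hintq g1 hg1 hg1w g2 hg2

lemma isPath_append {x y z : V} {p : G.Walk x y} {q : G.Walk y z}
    (hp : p.IsPath) (hq : q.IsPath)
    (hshared : ∀ v ∈ p.support, v ∈ q.support → v = y) : (p.append q).IsPath := by
  apply Walk.IsPath.mk'
  rw [Walk.support_append, List.nodup_append]
  refine ⟨hp.support_nodup, hq.support_nodup.tail, ?_⟩
  intro v hv v' hv' hvv'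
  rw [← hvv'] at hv'
  have hvq : v ∈ q.support := List.mem_of_mem_tail hv'
  have : v = y := hshared v hv hvq
  subst this
  have := hq.support_nodup
  rw [q.support_eq_cons] at this
  exact (List.nodup_cons.mp this).1 hv'

lemma isCycle_append {x y : V} (hxy : x ≠ y) {p : G.Walk x y} {q : G.Walk y x}
    (hp : p.IsPath) (hq : q.IsPath)
    (hshared : ∀ v ∈ p.support, v ∈ q.support → v = x ∨ v = y)
    (hedge : ∀ g ∈ p.edges, g ∉ q.edges) : (p.append q).IsCycle := by
  rw [Walk.isCycle_def]
  refine ⟨?_, ?_, ?_⟩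
  · rw [Walk.isTrail_def, Walk.edges_append, List.nodup_append]
    exact ⟨hp.isTrail.edges_nodup, hq.isTrail.edges_nodup, fun a ha b hb hab => hedge a ha (hab ▸ hb)⟩
  · intro hnil
    have := congrArg Walk.length hnil
    rw [Walk.length_append] at this
    simp at this
    exact hxy (Walk.Nil.eq this.1)
  · rw [Walk.tail_support_append, List.nodup_append]
    refine ⟨hp.support_nodup.tail, hq.support_nodup.tail, ?_⟩
    intro v hv v' hv' hvv'
    rw [← hvv'] at hv'
    have hvp : v ∈ p.support := List.mem_of_mem_tail hv
    have hvq : v ∈ q.support := List.mem_of_mem_tail hv'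
    have hx : v ≠ x := by
      rintro rfl
      have := hp.support_nodup
      rw [p.support_eq_cons] at this
      exact (List.nodup_cons.mp this).1 hv
    have hy : v ≠ y := by
      rintro rfl
      have := hq.support_nodup
      rw [q.support_eq_cons] at this
      exact (List.nodup_cons.mp this).1 hv'
    rcases hshared v hvp hvq with rfl | rfl
    · exact hx rfl
    · exact hy rfl
theorem symmetric_family (hG : IsSubdivisionOfK4 G) :
    ∃ (f : Fin 4 → V), Function.Injective f ∧
    ∃ Q : ∀ i j : Fin 4, i ≠ j → G.Walk (f i) (f j),
      (∀ i j (h : i ≠ j), (Q i j h).IsPath ∧ 0 < (Q i j h).length) ∧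
      (∀ i j (h : i ≠ j) (h' : j ≠ i), (Q j i h').edges.toFinset = (Q i j h).edges.toFinset) ∧
      (∀ (i j : Fin 4) (hij : i ≠ j) (k l : Fin 4) (hkl : k ≠ l), s(i, j) ≠ s(k, l) →
        ∀ x, x ∈ (Q i j hij).support → x ∈ (Q k l hkl).support →
          (x = f i ∨ x = f j) ∧ (x = f k ∨ x = f l)) ∧
      (∀ e : Sym2 V, e ∈ G.edgeSet ↔ ∃ i, ∃ j, ∃ hij : i ≠ j, e ∈ (Q i j hij).edges) := by
  obtain ⟨f, hf, P, hPprop, hPdisj, hPedge, -⟩ := hG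
  refine ⟨f, hf, fun i j hij =>
    if h : i < j then P i j h else (P j i (hij.lt_or_gt.resolve_left h)).reverse, ?_, ?_, ?_, ?_⟩
  · intro i j h
    dsimp only
    split_ifs with h1
    · exact hPprop i j h1
    · obtain ⟨hp, hl⟩ := hPprop j i (h.lt_or_gt.resolve_left h1)
      exact ⟨hp.reverse, by rwa [Walk.length_reverse]⟩
  · intro i j h h'
    dsimp only
    rcases h.lt_or_gt with hlt | hlt
    · rw [dif_neg (by omega : ¬ j < i), dif_pos hlt]
      simp [Walk.edges_reverse]
    · rw [dif_pos hlt, dif_neg (by omega : ¬ i < j)]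
      simp [Walk.edges_reverse]
  · intro i j hij k l hkl hne x hx1 hx2
    dsimp only at hx1 hx2
    have key : ∀ (i j : Fin 4) (hij : i < j) (k l : Fin 4) (hkl : k < l), s(i,j) ≠ s(k,l) →
        ∀ x, x ∈ (P i j hij).support → x ∈ (P k l hkl).support →
          (x = f i ∨ x = f j) ∧ (x = f k ∨ x = f l) := by
      intro i j hij k l hkl hne x h1 h2
      refine hPdisj i j hij k l hkl ?_ x h1 h2
      rintro heq
      rw [Prod.mk.injEq] at heq
      exact hne (by rw [heq.1, heq.2])
    split_ifs at hx1 hx2 with h1 h2 h2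
    · exact key i j h1 k l h2 hne x hx1 hx2
    · rw [Walk.support_reverse, List.mem_reverse] at hx2
      have := key i j h1 l k (hkl.lt_or_gt.resolve_left h2)
        (by rw [Sym2.eq_swap (a := k)] at hne; exact hne) x hx1 hx2
      exact ⟨this.1, this.2.symm⟩
    · rw [Walk.support_reverse, List.mem_reverse] at hx1
      have := key j i (hij.lt_or_gt.resolve_left h1) k l h2
        (by rw [Sym2.eq_swap (a := i)] at hne; exact hne) x hx1 hx2
      exact ⟨this.1.symm, this.2⟩
    · rw [Walk.support_reverse, List.mem_reverse] at hx1 hx2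
      have := key j i (hij.lt_or_gt.resolve_left h1) l k (hkl.lt_or_gt.resolve_left h2)
        (by rw [Sym2.eq_swap (a := i), Sym2.eq_swap (a := k)] at hne; exact hne) x hx1 hx2
      exact ⟨this.1.symm, this.2.symm⟩
  · intro g
    rw [hPedge g]
    constructor
    · rintro ⟨i, j, hij, hg⟩
      exact ⟨i, j, hij.ne, by dsimp only; rw [dif_pos hij]; exact hg⟩
    · rintro ⟨i, j, hij, hg⟩
      dsimp only at hg
      split_ifs at hg with h1
      · exact ⟨i, j, h1, hg⟩
      · rw [Walk.edges_reverse, List.mem_reverse] at hg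
        exact ⟨j, i, hij.lt_or_gt.resolve_left h1, hg⟩

end Aux


set_option maxHeartbeats 3000000 in
theorem even_signed_circles_in_K4_subdivision {V : Type*} [DecidableEq V]
    (G : SimpleGraph V) (σ : Sym2 V → ℤˣ)
    (hG : IsSubdivisionOfK4 G) (e : Sym2 V) (he : e ∈ G.edgeSet) :
    Even {s : Finset (Sym2 V) | IsCircleOf G s ∧ e ∈ s ∧ esign σ s = -1}.ncard ∧
    Even {s : Finset (Sym2 V) | IsCircleOf G s ∧ e ∈ s ∧ esign σ s = 1}.ncard := by
  classical
  obtain ⟨f, hf, Q, hQp, hQsymE, hQdisj, hQedge⟩ := symmetric_family hG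
  have hfne : ∀ {i j : Fin 4}, i ≠ j → f i ≠ f j := fun h heq => h (hf heq)
  have hs2ne : ∀ {i j k l : Fin 4}, ¬(i = k ∧ j = l) → ¬(i = l ∧ j = k) →
      s(i, j) ≠ s(k, l) := by
    intro i j k l h1 h2 h
    rcases Sym2.eq_iff.mp h with h'|h'
    · exact h1 h'
    · exact h2 h'
  have hQnn : ∀ (i j : Fin 4) (hij : i ≠ j), ¬ (Q i j hij).Nil := by
    intro i j hij hnil
    have := Walk.nil_iff_length_eq.mp hnil
    have := (hQp i j hij).2
    omega
  -- pairwise edge-disjointness of distinct branch paths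
  have hEdisj : ∀ (i j : Fin 4) (hij : i ≠ j) (k l : Fin 4) (hkl : k ≠ l), s(i,j) ≠ s(k,l) →
      ∀ g, g ∈ (Q i j hij).edges → g ∈ (Q k l hkl).edges → False := by
    intro i j hij k l hkl hne g hg1 hg2
    induction g with
    | _ x y =>
      have hadj : G.Adj x y := (Q i j hij).adj_of_mem_edges hg1
      have hxy : x ≠ y := hadj.ne
      have hx1 : x ∈ (Q i j hij).support := (Q i j hij).fst_mem_support_of_mem_edges hg1
      have hy1 : y ∈ (Q i j hij).support := (Q i j hij).snd_mem_support_of_mem_edges hg1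
      have hx2 : x ∈ (Q k l hkl).support := (Q k l hkl).fst_mem_support_of_mem_edges hg2
      have hy2 : y ∈ (Q k l hkl).support := (Q k l hkl).snd_mem_support_of_mem_edges hg2
      obtain ⟨hxij, hxkl⟩ := hQdisj i j hij k l hkl hne x hx1 hx2
      obtain ⟨hyij, hykl⟩ := hQdisj i j hij k l hkl hne y hy1 hy2
      apply hne
      rw [Sym2.eq_iff]
      rcases hxij with rfl|rfl
      · rcases hyij with h|h
        · exact absurd h.symm hxy
        · subst h
          rcases hxkl with h1|h1 <;> rcases hykl with h2|h2
          · exact absurd (hf (h1.trans h2.symm)) hij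
          · exact Or.inl ⟨hf h1, hf h2⟩
          · exact Or.inr ⟨hf h1, hf h2⟩
          · exact absurd (hf (h1.trans h2.symm)) hij
      · rcases hyij with h|h
        · subst h
          rcases hxkl with h1|h1 <;> rcases hykl with h2|h2
          · exact absurd (hf (h2.trans h1.symm)) hij
          · exact Or.inr ⟨hf h2, hf h1⟩
          · exact Or.inl ⟨hf h2, hf h1⟩
          · exact absurd (hf (h2.trans h1.symm)) hij
        · exact absurd h.symm hxy
  have hEndp : ∀ (i k l : Fin 4) (hkl : k ≠ l), f i ∈ (Q k l hkl).support → i = k ∨ i = l := by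
    intro i k l hkl hsupp
    by_contra hcon
    push_neg at hcon
    obtain ⟨hik, hil⟩ := hcon
    have h1 : f i ∈ (Q i k hik).support := Walk.start_mem_support _
    have hne : s(i, k) ≠ s(k, l) := hs2ne (fun h => hik h.1) (fun h => hil h.1)
    rcases (hQdisj i k hik k l hkl hne (f i) h1 hsupp).2 with h|h
    · exact hik (hf h)
    · exact hil (hf h)
  have hInterior : ∀ (i j : Fin 4) (hij : i ≠ j), ∀ v ∈ (Q i j hij).support, v ≠ f i → v ≠ f j →
      ∀ z, G.Adj v z → s(v, z) ∈ (Q i j hij).edges := by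
    intro i j hij v hv hvi hvj z hadj
    obtain ⟨k, l, hkl, hg⟩ := (hQedge s(v, z)).mp hadj
    have hvkl : v ∈ (Q k l hkl).support := (Q k l hkl).fst_mem_support_of_mem_edges hg
    by_cases hne : s(i, j) = s(k, l)
    · rcases Sym2.eq_iff.mp hne with ⟨h1, h2⟩|⟨h1, h2⟩
      · subst h1; subst h2; exact hg
      · subst h1; subst h2
        have h' : s(v, z) ∈ (Q j i hkl).edges.toFinset := List.mem_toFinset.mpr hg
        rw [hQsymE i j hij hkl] at h'
        exact List.mem_toFinset.mp h'
    · rcases (hQdisj i j hij k l hkl hne v hv hvkl).1 with h|h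
      · exact absurd h hvi
      · exact absurd h hvj
  obtain ⟨a, b, hab, heab⟩ := (hQedge e).mp he
  obtain ⟨c, d, hcd, hca, hcb, hda, hdb, hcover⟩ := (by decide :
    ∀ a b : Fin 4, a ≠ b → ∃ c d : Fin 4, c ≠ d ∧ c ≠ a ∧ c ≠ b ∧ d ≠ a ∧ d ≠ b ∧
      ∀ x : Fin 4, x = a ∨ x = b ∨ x = c ∨ x = d) a b hab
  have hac : a ≠ c := hca.symm
  have had : a ≠ d := hda.symm
  have hbc : b ≠ c := hcb.symm
  have hbd : b ≠ d := hdb.symm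
  have hdc : d ≠ c := hcd.symm
  -- the four candidate circles through e
  set C1 := (Q a b hab).edges.toFinset ∪
      ((Q b c hbc).edges.toFinset ∪ (Q a c hac).edges.toFinset) with hC1def
  set C2 := (Q a b hab).edges.toFinset ∪
      ((Q b d hbd).edges.toFinset ∪ (Q a d had).edges.toFinset) with hC2def
  set C3 := (Q a b hab).edges.toFinset ∪
      ((Q b c hbc).edges.toFinset ∪ ((Q c d hcd).edges.toFinset ∪ (Q a d had).edges.toFinset))
    with hC3def
  set C4 := (Q a b hab).edges.toFinset ∪
      ((Q b d hbd).edges.toFinset ∪ ((Q c d hcd).edges.toFinset ∪ (Q a c hac).edges.toFinset))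
    with hC4def
  -- constructions
  have htri : ∀ (p q r : Fin 4) (hpq : p ≠ q) (hqr : q ≠ r) (hpr : p ≠ r),
      IsCircleOf G ((Q p q hpq).edges.toFinset ∪
        ((Q q r hqr).edges.toFinset ∪ (Q p r hpr).edges.toFinset)) := by
    intro p q r hpq hqr hpr
    have hrp : r ≠ p := hpr.symm
    have hinner : ((Q q r hqr).append (Q r p hrp)).IsPath := by
      apply isPath_append (hQp q r hqr).1 (hQp r p hrp).1
      intro v hv1 hv2
      obtain ⟨h1, h2⟩ := hQdisj q r hqr r p hrp
        (hs2ne (fun h => hqr h.1) (fun h => hpq h.1.symm)) v hv1 hv2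
      rcases h1 with rfl|rfl
      · rcases h2 with h|h
        · exact absurd (hf h) hqr
        · exact absurd (hf h) (Ne.symm hpq)
      · rfl
    have hcyc : ((Q p q hpq).append ((Q q r hqr).append (Q r p hrp))).IsCycle := by
      apply isCycle_append (hfne hpq) (hQp p q hpq).1 hinner
      · intro v hv1 hv2
        rw [Walk.mem_support_append_iff] at hv2
        rcases hv2 with hv2|hv2
        · exact (hQdisj p q hpq q r hqr
            (hs2ne (fun h => hpq h.1) (fun h => hpr h.1)) v hv1 hv2).1
        · exact (hQdisj p q hpq r p hrp
            (hs2ne (fun h => hpr h.1) (fun h => hqr h.2)) v hv1 hv2).1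
      · intro g hg1 hg2
        rw [Walk.edges_append, List.mem_append] at hg2
        rcases hg2 with hg2|hg2
        · exact hEdisj p q hpq q r hqr
            (hs2ne (fun h => hpq h.1) (fun h => hpr h.1)) g hg1 hg2
        · exact hEdisj p q hpq r p hrp
            (hs2ne (fun h => hpr h.1) (fun h => hqr h.2)) g hg1 hg2
    refine ⟨f p, _, hcyc, ?_⟩
    rw [Walk.edges_append, Walk.edges_append, List.toFinset_append, List.toFinset_append,
      hQsymE p r hpr hrp]
  have hsq : ∀ (p q r s : Fin 4) (hpq : p ≠ q) (hqr : q ≠ r) (hrs : r ≠ s) (hps : p ≠ s)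
      (hpr : p ≠ r) (hqs : q ≠ s),
      IsCircleOf G ((Q p q hpq).edges.toFinset ∪
        ((Q q r hqr).edges.toFinset ∪
          ((Q r s hrs).edges.toFinset ∪ (Q p s hps).edges.toFinset))) := by
    intro p q r s hpq hqr hrs hps hpr hqs
    have hsp : s ≠ p := hps.symm
    have hinner1 : ((Q r s hrs).append (Q s p hsp)).IsPath := by
      apply isPath_append (hQp r s hrs).1 (hQp s p hsp).1
      intro v hv1 hv2
      obtain ⟨h1, h2⟩ := hQdisj r s hrs s p hsp
        (hs2ne (fun h => hrs h.1) (fun h => hpr h.1.symm)) v hv1 hv2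
      rcases h1 with rfl|rfl
      · rcases h2 with h|h
        · exact absurd (hf h) hrs
        · exact absurd (hf h) (Ne.symm hpr)
      · rfl
    have hinner : ((Q q r hqr).append ((Q r s hrs).append (Q s p hsp))).IsPath := by
      apply isPath_append (hQp q r hqr).1 hinner1
      intro v hv1 hv2
      rw [Walk.mem_support_append_iff] at hv2
      rcases hv2 with hv2|hv2
      · obtain ⟨h1, h2⟩ := hQdisj q r hqr r s hrs
          (hs2ne (fun h => hqr h.1) (fun h => hqs h.1)) v hv1 hv2
        rcases h1 with rfl|rfl
        · rcases h2 with h|h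
          · exact absurd (hf h) hqr
          · exact absurd (hf h) hqs
        · rfl
      · obtain ⟨h1, h2⟩ := hQdisj q r hqr s p hsp
          (hs2ne (fun h => hqs h.1) (fun h => hpq h.1.symm)) v hv1 hv2
        rcases h1 with rfl|rfl
        · rcases h2 with h|h
          · exact absurd (hf h) hqs
          · exact absurd (hf h) (Ne.symm hpq)
        · rcases h2 with h|h
          · exact absurd (hf h) hrs
          · exact absurd (hf h) (Ne.symm hpr)
    have hcyc :
        ((Q p q hpq).append ((Q q r hqr).append ((Q r s hrs).append (Q s p hsp)))).IsCycle := by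
      apply isCycle_append (hfne hpq) (hQp p q hpq).1 hinner
      · intro v hv1 hv2
        rw [Walk.mem_support_append_iff] at hv2
        rcases hv2 with hv2|hv2
        · exact (hQdisj p q hpq q r hqr
            (hs2ne (fun h => hpq h.1) (fun h => hpr h.1)) v hv1 hv2).1
        · rw [Walk.mem_support_append_iff] at hv2
          rcases hv2 with hv2|hv2
          · exact (hQdisj p q hpq r s hrs
              (hs2ne (fun h => hpr h.1) (fun h => hps h.1)) v hv1 hv2).1
          · exact (hQdisj p q hpq s p hsp
              (hs2ne (fun h => hps h.1) (fun h => hqs h.2)) v hv1 hv2).1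
      · intro g hg1 hg2
        rw [Walk.edges_append, List.mem_append] at hg2
        rcases hg2 with hg2|hg2
        · exact hEdisj p q hpq q r hqr
            (hs2ne (fun h => hpq h.1) (fun h => hpr h.1)) g hg1 hg2
        · rw [Walk.edges_append, List.mem_append] at hg2
          rcases hg2 with hg2|hg2
          · exact hEdisj p q hpq r s hrs
              (hs2ne (fun h => hpr h.1) (fun h => hps h.1)) g hg1 hg2
          · exact hEdisj p q hpq s p hsp
              (hs2ne (fun h => hps h.1) (fun h => hqs h.2)) g hg1 hg2
    refine ⟨f p, _, hcyc, ?_⟩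
    rw [Walk.edges_append, Walk.edges_append, Walk.edges_append, List.toFinset_append,
      List.toFinset_append, List.toFinset_append, hQsymE p s hps hsp]
  have hs1 : IsCircleOf G C1 := htri a b c hab hbc hac
  have hs2 : IsCircleOf G C2 := htri a b d hab hbd had
  have hs3 : IsCircleOf G C3 := hsq a b c d hab hbc hcd had hac hbd
  have hs4 : IsCircleOf G C4 := by
    have := hsq a b d c hab hbd hdc hac had hbc
    rwa [hQsymE c d hcd hdc] at this
  -- classification
  have classify : ∀ s : Finset (Sym2 V), IsCircleOf G s → e ∈ s →
      s = C1 ∨ s = C2 ∨ s = C3 ∨ s = C4 := by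
    have hba : b ≠ a := Ne.symm hab
    rintro s ⟨u, w, hw, rfl⟩ hes
    have hes' : e ∈ w.edges := List.mem_toFinset.mp hes
    have hstep : ∀ (i j : Fin 4) (hij : i ≠ j), ∀ g1 ∈ (Q i j hij).edges, g1 ∈ w.edges →
        ∀ g2 ∈ (Q i j hij).edges, g2 ∈ w.edges := fun i j hij =>
      step1 hw (Q i j hij) (hQp i j hij).1 (hInterior i j hij)
    have hzex : ∀ (i j : Fin 4) (hij : i ≠ j), ∃ z, s(f i, z) ∈ (Q i j hij).edges ∧
        ∀ g ∈ (Q i j hij).edges, f i ∈ g → g = s(f i, z) :=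
      fun i j hij => start_unique_edge (hQp i j hij).1 (hQnn i j hij)
    choose z hz1 hz2 using hzex
    have hTiff : ∀ (i j : Fin 4) (hij : i ≠ j),
        ((Q i j hij).edges.toFinset ⊆ w.edges.toFinset ↔ s(f i, z i j hij) ∈ w.edges) := by
      intro i j hij
      constructor
      · intro hT
        exact List.mem_toFinset.mp (hT (List.mem_toFinset.mpr (hz1 i j hij)))
      · intro hfe g hg
        exact List.mem_toFinset.mpr
          (hstep i j hij _ (hz1 i j hij) hfe g (List.mem_toFinset.mp hg))
    have hzadj : ∀ (i j : Fin 4) (hij : i ≠ j), G.Adj (f i) (z i j hij) :=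
      fun i j hij => (Q i j hij).adj_of_mem_edges (hz1 i j hij)
    have hzne : ∀ (i j : Fin 4) (hij : i ≠ j) (k : Fin 4) (hik : i ≠ k), j ≠ k →
        z i j hij ≠ z i k hik := by
      intro i j hij k hik hjk heq
      have h1 : z i j hij ∈ (Q i j hij).support :=
        mem_support_of_mem_edges' (hz1 i j hij) (by simp)
      have h2 : z i j hij ∈ (Q i k hik).support := by
        rw [heq]; exact mem_support_of_mem_edges' (hz1 i k hik) (by simp)
      have hzi : z i j hij ≠ f i := fun h => (hzadj i j hij).ne h.symm
      obtain ⟨ha1, ha2⟩ := hQdisj i j hij i k hik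
        (hs2ne (fun h => hjk h.2) (fun h => hik h.1)) _ h1 h2
      rcases ha1 with h|h
      · exact hzi h
      · rcases ha2 with h'|h'
        · exact hzi h'
        · exact hjk (hf (h.symm.trans h'))
    have hedge_at : ∀ (i : Fin 4) (x : V), s(f i, x) ∈ w.edges →
        ∃ m, ∃ him : i ≠ m, x = z i m him ∧
          (Q i m him).edges.toFinset ⊆ w.edges.toFinset := by
      intro i x hx
      have hadj : G.Adj (f i) x := w.adj_of_mem_edges hx
      have hcommon : ∀ (m : Fin 4) (him : i ≠ m), s(f i, x) ∈ (Q i m him).edges →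
          ∃ m', ∃ him' : i ≠ m', x = z i m' him' ∧
            (Q i m' him').edges.toFinset ⊆ w.edges.toFinset := by
        intro m him hgm
        have heq := hz2 i m him _ hgm (by simp)
        have hxz : x = z i m him := by
          rcases Sym2.eq_iff.mp heq with ⟨-, h⟩|⟨h1, h2⟩
          · exact h
          · exact h2.trans h1
        refine ⟨m, him, hxz, (hTiff i m him).mpr ?_⟩
        rw [← hxz]
        exact hx
      obtain ⟨k, l, hkl, hg⟩ := (hQedge s(f i, x)).mp hadj
      have hik : i = k ∨ i = l := hEndp i k l hkl ((Q k l hkl).fst_mem_support_of_mem_edges hg)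
      rcases hik with rfl|rfl
      · exact hcommon l hkl hg
      · refine hcommon k (Ne.symm hkl) ?_
        have h' : s(f i, x) ∈ (Q k i hkl).edges.toFinset := List.mem_toFinset.mpr hg
        rw [hQsymE i k (Ne.symm hkl) hkl] at h'
        exact List.mem_toFinset.mp h'
    have hdeg : ∀ (p q r s' : Fin 4) (hpq : p ≠ q) (hpr : p ≠ r) (hps : p ≠ s'),
        q ≠ r → q ≠ s' → r ≠ s' → (∀ x : Fin 4, x = p ∨ x = q ∨ x = r ∨ x = s') →
        ((decide ((Q p q hpq).edges.toFinset ⊆ w.edges.toFinset)).toNat +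
         (decide ((Q p r hpr).edges.toFinset ⊆ w.edges.toFinset)).toNat +
         (decide ((Q p s' hps).edges.toFinset ⊆ w.edges.toFinset)).toNat = 0 ∨
         (decide ((Q p q hpq).edges.toFinset ⊆ w.edges.toFinset)).toNat +
         (decide ((Q p r hpr).edges.toFinset ⊆ w.edges.toFinset)).toNat +
         (decide ((Q p s' hps).edges.toFinset ⊆ w.edges.toFinset)).toNat = 2) := by
      intro p q r s' hpq hpr hps hqr hqs hrs hcov
      by_cases hsupp : f p ∈ w.support
      · right
        obtain ⟨x, y, hxy, hmem⟩ := cycle_two_edges hw hsupp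
        obtain ⟨m1, hm1, hxz, hT1⟩ := hedge_at p x ((hmem x).mpr (Or.inl rfl))
        obtain ⟨m2, hm2, hyz, hT2⟩ := hedge_at p y ((hmem y).mpr (Or.inr rfl))
        have hTm : ∀ (m : Fin 4) (hm : p ≠ m),
            ((Q p m hm).edges.toFinset ⊆ w.edges.toFinset) ↔
              (z p m hm = x ∨ z p m hm = y) := by
          intro m hm
          rw [hTiff p m hm, hmem]
        have hm1m2 : m1 ≠ m2 := by
          rintro rfl
          exact hxy (hxz.trans hyz.symm)
        have key : ∀ (m : Fin 4) (hm : p ≠ m), m ≠ m1 → m ≠ m2 →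
            ¬ ((Q p m hm).edges.toFinset ⊆ w.edges.toFinset) := by
          intro m hm hne1 hne2 hT
          rcases (hTm m hm).mp hT with h|h
          · exact hzne p m hm m1 hm1 hne1 (h.trans hxz)
          · exact hzne p m hm m2 hm2 hne2 (h.trans hyz)
        have keyT : ∀ (m : Fin 4) (hm : p ≠ m), m = m1 ∨ m = m2 →
            ((Q p m hm).edges.toFinset ⊆ w.edges.toFinset) := by
          rintro m hm (rfl|rfl)
          · rw [hTm]
            exact Or.inl hxz.symm
          · rw [hTm]
            exact Or.inr hyz.symm
        have hm1mem : m1 = q ∨ m1 = r ∨ m1 = s' := by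
          rcases hcov m1 with h|h|h|h
          · exact absurd h.symm hm1
          · exact Or.inl h
          · exact Or.inr (Or.inl h)
          · exact Or.inr (Or.inr h)
        have hm2mem : m2 = q ∨ m2 = r ∨ m2 = s' := by
          rcases hcov m2 with h|h|h|h
          · exact absurd h.symm hm2
          · exact Or.inl h
          · exact Or.inr (Or.inl h)
          · exact Or.inr (Or.inr h)
        rcases hm1mem with h1|h1|h1 <;> rcases hm2mem with h2|h2|h2
        · exact absurd (h1.trans h2.symm) hm1m2
        · simp only [decide_eq_true (keyT q hpq (Or.inl h1.symm)), decide_eq_true (keyT r hpr (Or.inr h2.symm)),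
            decide_eq_false (key s' hps (fun hh => (hqs) (h1 ▸ hh).symm) (fun hh => (hrs) (h2 ▸ hh).symm))]
          rfl
        · simp only [decide_eq_true (keyT q hpq (Or.inl h1.symm)), decide_eq_true (keyT s' hps (Or.inr h2.symm)),
            decide_eq_false (key r hpr (fun hh => (hqr) (h1 ▸ hh).symm) (fun hh => ((Ne.symm hrs)) (h2 ▸ hh).symm))]
          rfl
        · simp only [decide_eq_true (keyT r hpr (Or.inl h1.symm)), decide_eq_true (keyT q hpq (Or.inr h2.symm)),
            decide_eq_false (key s' hps (fun hh => (hrs) (h1 ▸ hh).symm) (fun hh => (hqs) (h2 ▸ hh).symm))]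
          rfl
        · exact absurd (h1.trans h2.symm) hm1m2
        · simp only [decide_eq_true (keyT r hpr (Or.inl h1.symm)), decide_eq_true (keyT s' hps (Or.inr h2.symm)),
            decide_eq_false (key q hpq (fun hh => ((Ne.symm hqr)) (h1 ▸ hh).symm) (fun hh => ((Ne.symm hqs)) (h2 ▸ hh).symm))]
          rfl
        · simp only [decide_eq_true (keyT s' hps (Or.inl h1.symm)), decide_eq_true (keyT q hpq (Or.inr h2.symm)),
            decide_eq_false (key r hpr (fun hh => ((Ne.symm hrs)) (h1 ▸ hh).symm) (fun hh => (hqr) (h2 ▸ hh).symm))]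
          rfl
        · simp only [decide_eq_true (keyT s' hps (Or.inl h1.symm)), decide_eq_true (keyT r hpr (Or.inr h2.symm)),
            decide_eq_false (key q hpq (fun hh => ((Ne.symm hqs)) (h1 ▸ hh).symm) (fun hh => ((Ne.symm hqr)) (h2 ▸ hh).symm))]
          rfl
        · exact absurd (h1.trans h2.symm) hm1m2
      · left
        have hF : ∀ (m : Fin 4) (hm : p ≠ m),
            ¬ ((Q p m hm).edges.toFinset ⊆ w.edges.toFinset) := by
          intro m hm hT
          exact hsupp (w.fst_mem_support_of_mem_edges ((hTiff p m hm).mp hT))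
        simp only [decide_eq_false (hF q hpq), decide_eq_false (hF r hpr),
          decide_eq_false (hF s' hps)]
        rfl
    have hTsym : ∀ (i j : Fin 4) (hij : i ≠ j) (hji : j ≠ i),
        ((Q j i hji).edges.toFinset ⊆ w.edges.toFinset) ↔
        ((Q i j hij).edges.toFinset ⊆ w.edges.toFinset) := by
      intro i j hij hji
      rw [hQsymE i j hij hji]
    have hTab : (Q a b hab).edges.toFinset ⊆ w.edges.toFinset := by
      intro g hg
      exact List.mem_toFinset.mpr (hstep a b hab e heab hes' g (List.mem_toFinset.mp hg))
    have h0 : decide ((Q a b hab).edges.toFinset ⊆ w.edges.toFinset) = true := decide_eq_true hTab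
    have covb : ∀ x : Fin 4, x = b ∨ x = a ∨ x = c ∨ x = d := by
      intro x; rcases hcover x with h|h|h|h <;> tauto
    have covc : ∀ x : Fin 4, x = c ∨ x = a ∨ x = b ∨ x = d := by
      intro x; rcases hcover x with h|h|h|h <;> tauto
    have covd : ∀ x : Fin 4, x = d ∨ x = a ∨ x = b ∨ x = c := by
      intro x; rcases hcover x with h|h|h|h <;> tauto
    have h1 := hdeg a b c d hab hac had hbc hbd hcd hcover
    have h2 := hdeg b a c d hba hbc hbd hac had hcd covb
    have h3 := hdeg c a b d hca hcb hcd hab had hbd covc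
    have h4 := hdeg d a b c hda hdb hdc hab hac hbc covd
    rw [show (decide ((Q b a hba).edges.toFinset ⊆ w.edges.toFinset)) = decide ((Q a b hab).edges.toFinset ⊆ w.edges.toFinset) from
      decide_eq_decide.mpr (hTsym a b hab hba)] at h2
    rw [show (decide ((Q c a hca).edges.toFinset ⊆ w.edges.toFinset)) = decide ((Q a c hac).edges.toFinset ⊆ w.edges.toFinset) from
      decide_eq_decide.mpr (hTsym a c hac hca)] at h3
    rw [show (decide ((Q c b hcb).edges.toFinset ⊆ w.edges.toFinset)) = decide ((Q b c hbc).edges.toFinset ⊆ w.edges.toFinset) from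
      decide_eq_decide.mpr (hTsym b c hbc hcb)] at h3
    rw [show (decide ((Q d a hda).edges.toFinset ⊆ w.edges.toFinset)) = decide ((Q a d had).edges.toFinset ⊆ w.edges.toFinset) from
      decide_eq_decide.mpr (hTsym a d had hda)] at h4
    rw [show (decide ((Q d b hdb).edges.toFinset ⊆ w.edges.toFinset)) = decide ((Q b d hbd).edges.toFinset ⊆ w.edges.toFinset) from
      decide_eq_decide.mpr (hTsym b d hbd hdb)] at h4
    rw [show (decide ((Q d c hdc).edges.toFinset ⊆ w.edges.toFinset)) = decide ((Q c d hcd).edges.toFinset ⊆ w.edges.toFinset) from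
      decide_eq_decide.mpr (hTsym c d hcd hdc)] at h4
    have hpat := k4_pattern _ _ _ _ _ _ h0 h1 h2 h3 h4
    have hsub : ∀ C : Finset (Sym2 V),
        (((Q a b hab).edges.toFinset ⊆ w.edges.toFinset) → (Q a b hab).edges.toFinset ⊆ C) →
        (((Q a c hac).edges.toFinset ⊆ w.edges.toFinset) → (Q a c hac).edges.toFinset ⊆ C) →
        (((Q a d had).edges.toFinset ⊆ w.edges.toFinset) → (Q a d had).edges.toFinset ⊆ C) →
        (((Q b c hbc).edges.toFinset ⊆ w.edges.toFinset) → (Q b c hbc).edges.toFinset ⊆ C) →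
        (((Q b d hbd).edges.toFinset ⊆ w.edges.toFinset) → (Q b d hbd).edges.toFinset ⊆ C) →
        (((Q c d hcd).edges.toFinset ⊆ w.edges.toFinset) → (Q c d hcd).edges.toFinset ⊆ C) →
        w.edges.toFinset ⊆ C := by
      intro C H1 H2 H3 H4 H5 H6 g hg
      have hgw : g ∈ w.edges := List.mem_toFinset.mp hg
      obtain ⟨k, l, hkl, hgQ⟩ := (hQedge g).mp (w.edges_subset_edgeSet hgw)
      have hTkl : (Q k l hkl).edges.toFinset ⊆ w.edges.toFinset := by
        intro g' hg'
        exact List.mem_toFinset.mpr (hstep k l hkl g hgQ hgw g' (List.mem_toFinset.mp hg'))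
      have hgQ' : g ∈ (Q k l hkl).edges.toFinset := List.mem_toFinset.mpr hgQ
      clear hgQ hgw hg
      rcases hcover k with rfl|rfl|rfl|rfl <;> rcases hcover l with rfl|rfl|rfl|rfl
      · exact absurd rfl hkl
      · exact H1 hTkl hgQ'
      · exact H2 hTkl hgQ'
      · exact H3 hTkl hgQ'
      · refine H1 ((hTsym _ _ hab hkl).mp hTkl) ?_
        rwa [hQsymE _ _ hab hkl] at hgQ'
      · exact absurd rfl hkl
      · exact H4 hTkl hgQ'
      · exact H5 hTkl hgQ'
      · refine H2 ((hTsym _ _ hac hkl).mp hTkl) ?_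
        rwa [hQsymE _ _ hac hkl] at hgQ'
      · refine H4 ((hTsym _ _ hbc hkl).mp hTkl) ?_
        rwa [hQsymE _ _ hbc hkl] at hgQ'
      · exact absurd rfl hkl
      · exact H6 hTkl hgQ'
      · refine H3 ((hTsym _ _ had hkl).mp hTkl) ?_
        rwa [hQsymE _ _ had hkl] at hgQ'
      · refine H5 ((hTsym _ _ hbd hkl).mp hTkl) ?_
        rwa [hQsymE _ _ hbd hkl] at hgQ'
      · refine H6 ((hTsym _ _ hcd hkl).mp hTkl) ?_
        rwa [hQsymE _ _ hcd hkl] at hgQ'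
      · exact absurd rfl hkl
    rcases hpat with ⟨P1,P2,P3,N1,N2,N3⟩|⟨P1,P2,P3,N1,N2,N3⟩|⟨P1,P2,P3,P4,N1,N2⟩|⟨P1,P2,P3,P4,N1,N2⟩
    · left
      apply Finset.Subset.antisymm
      · refine hsub C1 (fun _ => ?_) (fun _ => ?_) (fun h => absurd h (fun hh => N1 (decide_eq_true hh)))
          (fun _ => ?_) (fun h => absurd h (fun hh => N2 (decide_eq_true hh))) (fun h => absurd h (fun hh => N3 (decide_eq_true hh)))
        · exact Finset.subset_union_left
        · exact Finset.Subset.trans Finset.subset_union_right Finset.subset_union_right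
        · exact Finset.Subset.trans Finset.subset_union_left Finset.subset_union_right
      · exact Finset.union_subset (of_decide_eq_true P1)
          (Finset.union_subset (of_decide_eq_true P3) (of_decide_eq_true P2))
    · right; left
      apply Finset.Subset.antisymm
      · refine hsub C2 (fun _ => ?_) (fun h => absurd h (fun hh => N1 (decide_eq_true hh))) (fun _ => ?_)
          (fun h => absurd h (fun hh => N2 (decide_eq_true hh))) (fun _ => ?_) (fun h => absurd h (fun hh => N3 (decide_eq_true hh)))
        · exact Finset.subset_union_left
        · exact Finset.Subset.trans Finset.subset_union_right Finset.subset_union_right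
        · exact Finset.Subset.trans Finset.subset_union_left Finset.subset_union_right
      · exact Finset.union_subset (of_decide_eq_true P1)
          (Finset.union_subset (of_decide_eq_true P3) (of_decide_eq_true P2))
    · right; right; left
      apply Finset.Subset.antisymm
      · refine hsub C3 (fun _ => ?_) (fun h => absurd h (fun hh => N1 (decide_eq_true hh))) (fun _ => ?_)
          (fun _ => ?_) (fun h => absurd h (fun hh => N2 (decide_eq_true hh))) (fun _ => ?_)
        · exact Finset.subset_union_left
        · exact Finset.Subset.trans
            (Finset.Subset.trans Finset.subset_union_right Finset.subset_union_right)
            Finset.subset_union_right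
        · exact Finset.Subset.trans Finset.subset_union_left Finset.subset_union_right
        · exact Finset.Subset.trans
            (Finset.Subset.trans Finset.subset_union_left Finset.subset_union_right)
            Finset.subset_union_right
      · exact Finset.union_subset (of_decide_eq_true P1)
          (Finset.union_subset (of_decide_eq_true P2)
            (Finset.union_subset (of_decide_eq_true P3) (of_decide_eq_true P4)))
    · right; right; right
      apply Finset.Subset.antisymm
      · refine hsub C4 (fun _ => ?_) (fun _ => ?_) (fun h => absurd h (fun hh => N1 (decide_eq_true hh)))
          (fun h => absurd h (fun hh => N2 (decide_eq_true hh))) (fun _ => ?_) (fun _ => ?_)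
        · exact Finset.subset_union_left
        · exact Finset.Subset.trans
            (Finset.Subset.trans Finset.subset_union_right Finset.subset_union_right)
            Finset.subset_union_right
        · exact Finset.Subset.trans Finset.subset_union_left Finset.subset_union_right
        · exact Finset.Subset.trans
            (Finset.Subset.trans Finset.subset_union_left Finset.subset_union_right)
            Finset.subset_union_right
      · exact Finset.union_subset (of_decide_eq_true P1)
          (Finset.union_subset (of_decide_eq_true P2)
            (Finset.union_subset (of_decide_eq_true P3) (of_decide_eq_true P4)))

  -- distinctness
  have hEne : ∀ (i j : Fin 4) (hij : i ≠ j), ((Q i j hij).edges.toFinset).Nonempty := by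
    intro i j hij
    have hl := (hQp i j hij).2
    have : (Q i j hij).edges ≠ [] := by
      intro h
      have := Walk.length_edges (Q i j hij)
      rw [h] at this
      simp at this
      omega
    obtain ⟨g, hg⟩ := List.exists_mem_of_ne_nil _ this
    exact ⟨g, List.mem_toFinset.mpr hg⟩
  have hnotin : ∀ (i j : Fin 4) (hij : i ≠ j) (k l : Fin 4) (hkl : k ≠ l), s(i,j) ≠ s(k,l) →
      ∀ g ∈ (Q i j hij).edges.toFinset, g ∉ (Q k l hkl).edges.toFinset := by
    intro i j hij k l hkl hne g hg hg'
    exact hEdisj i j hij k l hkl hne g (List.mem_toFinset.mp hg) (List.mem_toFinset.mp hg')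
  have hba : b ≠ a := Ne.symm hab
  have hdisjF : ∀ (i j : Fin 4) (hij : i ≠ j) (k l : Fin 4) (hkl : k ≠ l), s(i,j) ≠ s(k,l) →
      Disjoint ((Q i j hij).edges.toFinset) ((Q k l hkl).edges.toFinset) := by
    intro i j hij k l hkl hne
    rw [Finset.disjoint_left]
    intro g hg hg'
    exact hnotin i j hij k l hkl hne g hg hg'
  have hd12 : C1 ≠ C2 := by
    obtain ⟨g, hg⟩ := hEne b c hbc
    intro hEq
    have hgA : g ∈ C1 := by
      rw [hC1def]
      exact Finset.mem_union_right _ (Finset.mem_union_left _ hg)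
    rw [hEq, hC2def] at hgA
    rcases Finset.mem_union.mp hgA with h0|rest0
    · exact hnotin b c hbc a b hab (hs2ne (fun h => hba h.1) (fun h => hca h.2)) g hg h0
    rcases Finset.mem_union.mp rest0 with h1|h2
    · exact hnotin b c hbc b d hbd (hs2ne (fun h => hcd h.2) (fun h => hbd h.1)) g hg h1
    · exact hnotin b c hbc a d had (hs2ne (fun h => hba h.1) (fun h => hbd h.1)) g hg h2
  have hd13 : C1 ≠ C3 := by
    obtain ⟨g, hg⟩ := hEne c d hcd
    intro hEq
    have hgA : g ∈ C3 := by
      rw [hC3def]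
      exact Finset.mem_union_right _ (Finset.mem_union_right _ (Finset.mem_union_left _ hg))
    rw [← hEq, hC1def] at hgA
    rcases Finset.mem_union.mp hgA with h0|rest0
    · exact hnotin c d hcd a b hab (hs2ne (fun h => hca h.1) (fun h => hcb h.1)) g hg h0
    rcases Finset.mem_union.mp rest0 with h1|h2
    · exact hnotin c d hcd b c hbc (hs2ne (fun h => hcb h.1) (fun h => hdb h.2)) g hg h1
    · exact hnotin c d hcd a c hac (hs2ne (fun h => hca h.1) (fun h => hda h.2)) g hg h2
  have hd14 : C1 ≠ C4 := by
    obtain ⟨g, hg⟩ := hEne b c hbc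
    intro hEq
    have hgA : g ∈ C1 := by
      rw [hC1def]
      exact Finset.mem_union_right _ (Finset.mem_union_left _ hg)
    rw [hEq, hC4def] at hgA
    rcases Finset.mem_union.mp hgA with h0|rest0
    · exact hnotin b c hbc a b hab (hs2ne (fun h => hba h.1) (fun h => hca h.2)) g hg h0
    rcases Finset.mem_union.mp rest0 with h1|rest1
    · exact hnotin b c hbc b d hbd (hs2ne (fun h => hcd h.2) (fun h => hbd h.1)) g hg h1
    rcases Finset.mem_union.mp rest1 with h2|h3
    · exact hnotin b c hbc c d hcd (hs2ne (fun h => hbc h.1) (fun h => hbd h.1)) g hg h2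
    · exact hnotin b c hbc a c hac (hs2ne (fun h => hba h.1) (fun h => hbc h.1)) g hg h3
  have hd23 : C2 ≠ C3 := by
    obtain ⟨g, hg⟩ := hEne b d hbd
    intro hEq
    have hgA : g ∈ C2 := by
      rw [hC2def]
      exact Finset.mem_union_right _ (Finset.mem_union_left _ hg)
    rw [hEq, hC3def] at hgA
    rcases Finset.mem_union.mp hgA with h0|rest0
    · exact hnotin b d hbd a b hab (hs2ne (fun h => hba h.1) (fun h => hda h.2)) g hg h0
    rcases Finset.mem_union.mp rest0 with h1|rest1
    · exact hnotin b d hbd b c hbc (hs2ne (fun h => hdc h.2) (fun h => hbc h.1)) g hg h1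
    rcases Finset.mem_union.mp rest1 with h2|h3
    · exact hnotin b d hbd c d hcd (hs2ne (fun h => hbc h.1) (fun h => hbd h.1)) g hg h2
    · exact hnotin b d hbd a d had (hs2ne (fun h => hba h.1) (fun h => hbd h.1)) g hg h3
  have hd24 : C2 ≠ C4 := by
    obtain ⟨g, hg⟩ := hEne a d had
    intro hEq
    have hgA : g ∈ C2 := by
      rw [hC2def]
      exact Finset.mem_union_right _ (Finset.mem_union_right _ (hg))
    rw [hEq, hC4def] at hgA
    rcases Finset.mem_union.mp hgA with h0|rest0
    · exact hnotin a d had a b hab (hs2ne (fun h => hdb h.2) (fun h => hab h.1)) g hg h0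
    rcases Finset.mem_union.mp rest0 with h1|rest1
    · exact hnotin a d had b d hbd (hs2ne (fun h => hab h.1) (fun h => had h.1)) g hg h1
    rcases Finset.mem_union.mp rest1 with h2|h3
    · exact hnotin a d had c d hcd (hs2ne (fun h => hac h.1) (fun h => had h.1)) g hg h2
    · exact hnotin a d had a c hac (hs2ne (fun h => hdc h.2) (fun h => hac h.1)) g hg h3
  have hd34 : C3 ≠ C4 := by
    obtain ⟨g, hg⟩ := hEne b c hbc
    intro hEq
    have hgA : g ∈ C3 := by
      rw [hC3def]
      exact Finset.mem_union_right _ (Finset.mem_union_left _ hg)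
    rw [hEq, hC4def] at hgA
    rcases Finset.mem_union.mp hgA with h0|rest0
    · exact hnotin b c hbc a b hab (hs2ne (fun h => hba h.1) (fun h => hca h.2)) g hg h0
    rcases Finset.mem_union.mp rest0 with h1|rest1
    · exact hnotin b c hbc b d hbd (hs2ne (fun h => hcd h.2) (fun h => hbd h.1)) g hg h1
    rcases Finset.mem_union.mp rest1 with h2|h3
    · exact hnotin b c hbc c d hcd (hs2ne (fun h => hbc h.1) (fun h => hbd h.1)) g hg h2
    · exact hnotin b c hbc a c hac (hs2ne (fun h => hba h.1) (fun h => hbc h.1)) g hg h3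
  have hin1 : e ∈ C1 := by
    rw [hC1def]
    exact Finset.mem_union_left _ (List.mem_toFinset.mpr heab)
  have hin2 : e ∈ C2 := by
    rw [hC2def]
    exact Finset.mem_union_left _ (List.mem_toFinset.mpr heab)
  have hin3 : e ∈ C3 := by
    rw [hC3def]
    exact Finset.mem_union_left _ (List.mem_toFinset.mpr heab)
  have hin4 : e ∈ C4 := by
    rw [hC4def]
    exact Finset.mem_union_left _ (List.mem_toFinset.mpr heab)
  have hes1 : esign σ C1 = esign σ (Q a b hab).edges.toFinset * (esign σ (Q b c hbc).edges.toFinset * esign σ (Q a c hac).edges.toFinset) := by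
    rw [hC1def]
    simp only [esign]
    rw [Finset.prod_union (Finset.disjoint_union_right.mpr ⟨hdisjF a b hab b c hbc (hs2ne (fun h => hab h.1) (fun h => hac h.1)), hdisjF a b hab a c hac (hs2ne (fun h => hbc h.2) (fun h => hac h.1))⟩), Finset.prod_union (hdisjF b c hbc a c hac (hs2ne (fun h => hba h.1) (fun h => hbc h.1)))]
  have hes2 : esign σ C2 = esign σ (Q a b hab).edges.toFinset * (esign σ (Q b d hbd).edges.toFinset * esign σ (Q a d had).edges.toFinset) := by
    rw [hC2def]
    simp only [esign]
    rw [Finset.prod_union (Finset.disjoint_union_right.mpr ⟨hdisjF a b hab b d hbd (hs2ne (fun h => hab h.1) (fun h => had h.1)), hdisjF a b hab a d had (hs2ne (fun h => hbd h.2) (fun h => had h.1))⟩), Finset.prod_union (hdisjF b d hbd a d had (hs2ne (fun h => hba h.1) (fun h => hbd h.1)))]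
  have hes3 : esign σ C3 = esign σ (Q a b hab).edges.toFinset * (esign σ (Q b c hbc).edges.toFinset * (esign σ (Q c d hcd).edges.toFinset * esign σ (Q a d had).edges.toFinset)) := by
    rw [hC3def]
    simp only [esign]
    rw [Finset.prod_union (Finset.disjoint_union_right.mpr ⟨hdisjF a b hab b c hbc (hs2ne (fun h => hab h.1) (fun h => hac h.1)), Finset.disjoint_union_right.mpr ⟨hdisjF a b hab c d hcd (hs2ne (fun h => hac h.1) (fun h => had h.1)), hdisjF a b hab a d had (hs2ne (fun h => hbd h.2) (fun h => had h.1))⟩⟩), Finset.prod_union (Finset.disjoint_union_right.mpr ⟨hdisjF b c hbc c d hcd (hs2ne (fun h => hbc h.1) (fun h => hbd h.1)), hdisjF b c hbc a d had (hs2ne (fun h => hba h.1) (fun h => hbd h.1))⟩), Finset.prod_union (hdisjF c d hcd a d had (hs2ne (fun h => hca h.1) (fun h => hcd h.1)))]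
  have hes4 : esign σ C4 = esign σ (Q a b hab).edges.toFinset * (esign σ (Q b d hbd).edges.toFinset * (esign σ (Q c d hcd).edges.toFinset * esign σ (Q a c hac).edges.toFinset)) := by
    rw [hC4def]
    simp only [esign]
    rw [Finset.prod_union (Finset.disjoint_union_right.mpr ⟨hdisjF a b hab b d hbd (hs2ne (fun h => hab h.1) (fun h => had h.1)), Finset.disjoint_union_right.mpr ⟨hdisjF a b hab c d hcd (hs2ne (fun h => hac h.1) (fun h => had h.1)), hdisjF a b hab a c hac (hs2ne (fun h => hbc h.2) (fun h => hac h.1))⟩⟩), Finset.prod_union (Finset.disjoint_union_right.mpr ⟨hdisjF b d hbd c d hcd (hs2ne (fun h => hbc h.1) (fun h => hbd h.1)), hdisjF b d hbd a c hac (hs2ne (fun h => hba h.1) (fun h => hbc h.1))⟩), Finset.prod_union (hdisjF c d hcd a c hac (hs2ne (fun h => hca h.1) (fun h => hda h.2)))]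
  have hprod : esign σ C1 * esign σ C2 * esign σ C3 * esign σ C4 = 1 := by
    rw [hes1, hes2, hes3, hes4]
    rcases Int.units_eq_one_or (esign σ (Q a b hab).edges.toFinset) with hu0|hu0 <;>
    rcases Int.units_eq_one_or (esign σ (Q a c hac).edges.toFinset) with hu1|hu1 <;>
    rcases Int.units_eq_one_or (esign σ (Q a d had).edges.toFinset) with hu2|hu2 <;>
    rcases Int.units_eq_one_or (esign σ (Q b c hbc).edges.toFinset) with hu3|hu3 <;>
    rcases Int.units_eq_one_or (esign σ (Q b d hbd).edges.toFinset) with hu4|hu4 <;>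
    rcases Int.units_eq_one_or (esign σ (Q c d hcd).edges.toFinset) with hu5|hu5 <;>
      rw [hu0, hu1, hu2, hu3, hu4, hu5] <;> decide
  have key : ∀ t : ℤˣ, {s : Finset (Sym2 V) | IsCircleOf G s ∧ e ∈ s ∧ esign σ s = t} =
      ↑((({C1, C2, C3, C4} : Finset (Finset (Sym2 V))).filter (fun s => esign σ s = t))) := by
    intro t
    ext s0
    simp only [Set.mem_setOf_eq, Finset.coe_filter, Finset.mem_insert, Finset.mem_singleton]
    constructor
    · rintro ⟨hs0, hes0, hsg⟩
      exact ⟨classify s0 hs0 hes0, hsg⟩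
    · rintro ⟨h, hsg⟩
      rcases h with rfl|rfl|rfl|rfl
      exacts [⟨hs1, hin1, hsg⟩, ⟨hs2, hin2, hsg⟩, ⟨hs3, hin3, hsg⟩, ⟨hs4, hin4, hsg⟩]
  rw [key (-1), key 1, Set.ncard_coe_finset, Set.ncard_coe_finset]
  have hcard : ∀ t : ℤˣ,
      ((({C1, C2, C3, C4} : Finset (Finset (Sym2 V))).filter (fun s => esign σ s = t)).card) =
      (if esign σ C1 = t then 1 else 0) + ((if esign σ C2 = t then 1 else 0) +
      ((if esign σ C3 = t then 1 else 0) + (if esign σ C4 = t then 1 else 0))) := by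
    intro t
    rw [show ({C1, C2, C3, C4} : Finset (Finset (Sym2 V))) =
      insert C1 (insert C2 (insert C3 {C4})) from rfl]
    rw [Finset.card_filter]
    rw [Finset.sum_insert (by simp [hd12, hd13, hd14]),
        Finset.sum_insert (by simp [hd23, hd24]),
        Finset.sum_insert (by simp [hd34]),
        Finset.sum_singleton]
  rw [hcard (-1), hcard 1]
  exact sign_parity _ _ _ _ hprod
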